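/- Let K := Frac(ℂ[u, v]) be the fraction field of the polynomial ring in two variables u, v over ℂ, and let R₁ ⊂ K be the ℂ-subalgebra generated by u/v and 1/v. Set K₁₂ := [[−u/v, (u/v)² + 1/v],[1, −u/v]] and G~ := K₁₂² · [[(1/v)², 0],[0, 1/v]], 2×2 matrices over K. Then the set of pairs (s₁, s₂) of polynomials in ℂ[u, v] such that both entries of the column vector G~ · (s₁, s₂)ᵗ lie in R₁ is a ℂ-linear subspace of ℂ[u, v] × ℂ[u, v] of dimension 15. -/

import Mathlib

set_option synthInstance.maxHeartbeats 1000000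
set_option maxHeartbeats 4000000
set_option linter.unusedTactic false
set_option linter.unreachableTactic false
set_option linter.unusedVariables false
set_option linter.unnecessarySeqFocus false


/-- `K = Frac(ℂ[u,v])`, the fraction field of the polynomial ring in two variables
(`u = X 0`, `v = X 1`). -/
noncomputable abbrev KK : Type := FractionRing (MvPolynomial (Fin 2) ℂ)

/-- `u ∈ K`. -/
noncomputable def uu : KK := algebraMap (MvPolynomial (Fin 2) ℂ) KK (MvPolynomial.X 0)

/-- `v ∈ K`. -/
noncomputable def vv : KK := algebraMap (MvPolynomial (Fin 2) ℂ) KK (MvPolynomial.X 1)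

/-- `R₁ ⊂ K`, the `ℂ`-subalgebra generated by `u/v` and `1/v` (the coordinate ring of the
chart `U₁` of `ℙ²` inside `ℂ(ℙ²)`). -/
noncomputable def R₁ : Subalgebra ℂ KK := Algebra.adjoin ℂ {uu / vv, 1 / vv}

/-- The transition factor `K₁₂ = !![−u/v, (u/v)² + 1/v; 1, −u/v]`. -/
noncomputable def K₁₂ : Matrix (Fin 2) (Fin 2) KK :=
  !![-(uu / vv), (uu / vv) ^ 2 + 1 / vv; 1, -(uu / vv)]

/-- The transition function `G~ = K₁₂² * !![(1/v)², 0; 0, 1/v]` of `φ_*O_X(4,2)`. -/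
noncomputable def Gt : Matrix (Fin 2) (Fin 2) KK :=
  K₁₂ ^ 2 * !![(1 / vv) ^ 2, 0; 0, 1 / vv]

namespace Stmt12Aux

open MvPolynomial

abbrev MP : Type := MvPolynomial (Fin 2) ℂ

noncomputable def Xu : MP := X 0
noncomputable def Xv : MP := X 1

noncomputable def mF (i j : ℕ) : Fin 2 →₀ ℕ := Finsupp.single 0 i + Finsupp.single 1 j

@[simp] lemma mF_sum (i j : ℕ) : ((mF i j).sum fun _ e => e) = i + j := by
  rw [Finsupp.sum_fintype] <;> simp [mF, Fin.sum_univ_two]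

lemma mF_sum' (i j : ℕ) : ∑ a ∈ (mF i j).support, (mF i j) a = i + j := mF_sum i j

lemma eq_mF (m : Fin 2 →₀ ℕ) : m = mF (m 0) (m 1) := by
  ext a; fin_cases a <;> simp [mF]

@[simp] lemma mF_eq_iff {i j i' j' : ℕ} : mF i j = mF i' j' ↔ i = i' ∧ j = j' := by
  constructor
  · intro h
    refine ⟨?_, ?_⟩
    · have := congrArg (fun f => f 0) h; simpa [mF] using this
    · have := congrArg (fun f => f 1) h; simpa [mF] using this
  · rintro ⟨rfl, rfl⟩; rfl

noncomputable def mono (i j : ℕ) (c : ℂ) : MP := monomial (mF i j) c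

lemma coeff_mono (i j a b : ℕ) (c : ℂ) :
    coeff (mF i j) (mono a b c) = if a = i ∧ b = j then c else 0 := by
  rw [mono, coeff_monomial]
  simp only [mF_eq_iff]

lemma mono_eq (i j : ℕ) (c : ℂ) : mono i j c = C c * Xu ^ i * Xv ^ j := by
  rw [mono, mF, monomial_eq, Finsupp.prod_fintype]
  · simp [Fin.prod_univ_two, Xu, Xv, mul_assoc]
  · intro x; simp

lemma totalDegree_mono_le (i j : ℕ) (c : ℂ) : (mono i j c).totalDegree ≤ i + j := by
  refine (totalDegree_monomial_le _ _).trans ?_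
  exact (mF_sum i j).le

lemma coeff_Xu_mul (i j : ℕ) (p : MP) :
    coeff (mF i j) (Xu * p) = if i = 0 then 0 else coeff (mF (i-1) j) p := by
  rw [Xu, coeff_X_mul']
  rcases Nat.eq_zero_or_pos i with h | h
  · subst h; simp [mF, Finsupp.mem_support_iff, Finsupp.single_apply]
  · rw [if_pos, if_neg (by omega)]
    · congr 1
      ext a
      fin_cases a <;> simp [mF, Finsupp.single_apply] <;> omega
    · simp [mF, Finsupp.mem_support_iff, Finsupp.single_apply]; omega

lemma coeff_Xv_mul (i j : ℕ) (p : MP) :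
    coeff (mF i j) (Xv * p) = if j = 0 then 0 else coeff (mF i (j-1)) p := by
  rw [Xv, coeff_X_mul']
  rcases Nat.eq_zero_or_pos j with h | h
  · subst h; simp [mF, Finsupp.mem_support_iff, Finsupp.single_apply]
  · rw [if_pos, if_neg (by omega)]
    · congr 1
      ext a
      fin_cases a <;> simp [mF, Finsupp.single_apply] <;> omega
    · simp [mF, Finsupp.mem_support_iff, Finsupp.single_apply]; omega

noncomputable def ψ : MP →+* KK := algebraMap MP KK

lemma ψ_inj : Function.Injective ψ := IsFractionRing.injective _ _

lemma hXv : ψ Xv ≠ 0 := fun h => (X_ne_zero (R := ℂ) (1 : Fin 2)) (ψ_inj (by rw [map_zero]; exact h))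

lemma uu_eq : uu = ψ Xu := rfl
lemma vv_eq : vv = ψ Xv := rfl

lemma ψC (c : ℂ) : ψ (C c) = algebraMap ℂ KK c := by
  rw [show (C c : MP) = algebraMap ℂ MP c from rfl]
  simp only [ψ]; rw [← IsScalarTower.algebraMap_apply]

lemma ψC2 : ψ (C 2 : MP) = 2 := by rw [ψC, map_ofNat]

/-! ### Membership in `R₁` -/

lemma mem_R₁_of_deg {p : MP} {d : ℕ} (h : p.totalDegree ≤ d) :
    ψ p / ψ Xv ^ d ∈ R₁ := by
  have hu : uu / vv ∈ R₁ := Algebra.subset_adjoin (by simp [R₁])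
  have hw : 1 / vv ∈ R₁ := Algebra.subset_adjoin (by simp [R₁])
  rw [show p = ∑ m ∈ p.support, monomial m (coeff m p) from (p.as_sum)]
  rw [map_sum ψ, Finset.sum_div]
  refine sum_mem fun m hm => ?_
  have hdeg : m 0 + m 1 ≤ d := by
    have := le_totalDegree (p := p) hm
    have h2 : (m.sum fun _ e => e) = m 0 + m 1 := by
      rw [Finsupp.sum_fintype] <;> simp [Fin.sum_univ_two]
    omega
  obtain ⟨i, j, rfl⟩ : ∃ i j, m = mF i j := ⟨m 0, m 1, eq_mF m⟩
  rw [show (monomial (mF i j)) (coeff (mF i j) p) = mono i j (coeff (mF i j) p) from rfl]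
  set c := coeff (mF i j) p
  have hij : i + j ≤ d := by simpa [mF, Finsupp.single_apply] using hdeg
  have key : ψ (mono i j c) / ψ Xv ^ d
      = algebraMap ℂ KK c * ((uu/vv) ^ i * (1/vv) ^ (d - (i + j))) := by
    obtain ⟨e, rfl⟩ : ∃ e, d = e + (i + j) := ⟨d - (i+j), by omega⟩
    rw [mono_eq, map_mul, map_mul, map_pow, map_pow, ← uu_eq, ← vv_eq]
    rw [ψC]
    have hv : vv ≠ 0 := hXv
    simp only [Nat.add_sub_cancel]
    field_simp
    have hi : vv ^ i * vv⁻¹ ^ i = 1 := by rw [← mul_pow, mul_inv_cancel₀ hv, one_pow]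
    have he : vv ^ e * vv⁻¹ ^ e = 1 := by rw [← mul_pow, mul_inv_cancel₀ hv, one_pow]
    linear_combination (-(algebraMap ℂ KK c * uu ^ i * vv ^ j * (vv ^ e * vv⁻¹ ^ e))) * hi
      - (algebraMap ℂ KK c * uu ^ i * vv ^ j) * he
  rw [key]
  exact mul_mem (Subalgebra.algebraMap_mem _ _) (mul_mem (pow_mem hu i) (pow_mem hw _))

lemma wsum (m : Fin 2 →₀ ℕ) : (m.sum fun _ e => e) = m 0 + m 1 := by
  rw [Finsupp.sum_fintype] <;> simp [Fin.sum_univ_two]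

lemma wsum' (m : Fin 2 →₀ ℕ) : ∑ a ∈ m.support, m a = m 0 + m 1 := wsum m

lemma coeff_mul_Xv_pow (m : Fin 2 →₀ ℕ) (e : ℕ) (p : MP) :
    coeff (m + Finsupp.single 1 e) (p * Xv ^ e) = coeff m p := by
  induction e with
  | zero => simp
  | succ n ih =>
      have h : m + Finsupp.single 1 (n+1) = (m + Finsupp.single 1 n) + Finsupp.single 1 1 := by
        rw [Finsupp.single_add, add_assoc]
      simp only [Xv] at ih ⊢
      rw [h, pow_succ, ← mul_assoc, coeff_mul_X, ih]

lemma deg_mul_Xv_pow {p : MP} (hp : p ≠ 0) (e : ℕ) :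
    (p * Xv ^ e).totalDegree = p.totalDegree + e := by
  refine le_antisymm ((totalDegree_mul _ _).trans ?_) ?_
  · rw [Xv, totalDegree_X_pow]
  · obtain ⟨m, hm, hsup⟩ := Finset.exists_mem_eq_sup p.support
      (by simpa using hp) (fun m => m.sum fun _ e => e)
    have hcoeff : coeff (m + Finsupp.single 1 e) (p * Xv ^ e) ≠ 0 := by
      rw [coeff_mul_Xv_pow]; exact mem_support_iff.mp hm
    have hle := le_totalDegree (mem_support_iff.mpr hcoeff)
    rw [wsum] at hle
    have e0 : (m + Finsupp.single (1:Fin 2) e) (0:Fin 2) = m 0 := by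
      rw [Finsupp.add_apply, Finsupp.single_eq_of_ne (by decide), add_zero]
    have e1 : (m + Finsupp.single (1:Fin 2) e) (1:Fin 2) = m 1 + e := by
      rw [Finsupp.add_apply, Finsupp.single_eq_same]
    rw [e0, e1] at hle
    rw [MvPolynomial.totalDegree, hsup, wsum]
    omega

lemma exists_rep {x : KK} (hx : x ∈ R₁) :
    ∃ (q : MP) (e : ℕ), q.totalDegree ≤ e ∧ x = ψ q / ψ Xv ^ e := by
  induction hx using Algebra.adjoin_induction with
  | mem x hx =>
      rcases hx with h | h
      · exact ⟨Xu, 1, by simp [Xu, totalDegree_X], by rw [h, pow_one]; rfl⟩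
      · refine ⟨1, 1, by simp, ?_⟩
        simp only [Set.mem_singleton_iff] at h
        rw [h, pow_one, map_one]; rfl
  | algebraMap r =>
      refine ⟨C r, 0, by simp [totalDegree_C], ?_⟩
      rw [pow_zero, div_one, ψC]
  | add x y hx hy ihx ihy =>
      obtain ⟨q₁, e₁, hd₁, rfl⟩ := ihx
      obtain ⟨q₂, e₂, hd₂, rfl⟩ := ihy
      refine ⟨q₁ * Xv ^ e₂ + q₂ * Xv ^ e₁, e₁ + e₂, ?_, ?_⟩
      · refine (totalDegree_add _ _).trans (max_le ?_ ?_) <;>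
          refine (totalDegree_mul _ _).trans ?_ <;> rw [Xv, totalDegree_X_pow] <;> omega
      · have h1 : ψ Xv ^ e₁ ≠ 0 := pow_ne_zero _ hXv
        have h2 : ψ Xv ^ e₂ ≠ 0 := pow_ne_zero _ hXv
        rw [map_add, map_mul, map_mul, map_pow, map_pow, pow_add,
          div_add_div _ _ h1 h2] <;> ring_nf
  | mul x y hx hy ihx ihy =>
      obtain ⟨q₁, e₁, hd₁, rfl⟩ := ihx
      obtain ⟨q₂, e₂, hd₂, rfl⟩ := ihy
      refine ⟨q₁ * q₂, e₁ + e₂, ?_, ?_⟩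
      · exact (totalDegree_mul _ _).trans (by omega)
      · rw [map_mul, div_mul_div_comm, ← pow_add]

lemma deg_of_mem_R₁ {p : MP} {d : ℕ} (h : ψ p / ψ Xv ^ d ∈ R₁) :
    p.totalDegree ≤ d := by
  rcases eq_or_ne p 0 with rfl | hp
  · simp
  obtain ⟨q, e, hdq, heq⟩ := exists_rep h
  have hd : ψ Xv ^ d ≠ 0 := pow_ne_zero _ hXv
  have he : ψ Xv ^ e ≠ 0 := pow_ne_zero _ hXv
  rw [div_eq_div_iff hd he] at heq
  have hpq : p * Xv ^ e = q * Xv ^ d := by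
    apply ψ_inj
    rw [map_mul, map_mul, map_pow, map_pow]; exact heq
  have hq : q ≠ 0 := by
    rintro rfl
    apply hp
    rw [zero_mul] at hpq
    exact (mul_eq_zero.mp hpq).resolve_right (pow_ne_zero _ (X_ne_zero (R := ℂ) 1))
  have h1 := deg_mul_Xv_pow hp e
  have h2 := deg_mul_Xv_pow hq d
  rw [hpq, h2] at h1
  omega

/-! ### The linear maps `Pl`, `Ql` -/

noncomputable def Pl : MP × MP →ₗ[ℂ] MP :=
  (LinearMap.mulLeft ℂ (C 2 * Xu^2 + Xv)).comp (LinearMap.fst ℂ MP MP)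
    - (LinearMap.mulLeft ℂ (C 2 * Xu^3 + C 2 * (Xu * Xv))).comp (LinearMap.snd ℂ MP MP)

noncomputable def Ql : MP × MP →ₗ[ℂ] MP :=
  (LinearMap.mulLeft ℂ (C 2 * Xu^2 + Xv)).comp (LinearMap.snd ℂ MP MP)
    - (LinearMap.mulLeft ℂ (C 2 * Xu)).comp (LinearMap.fst ℂ MP MP)

lemma Pl_apply (x : MP × MP) :
    Pl x = (C 2 * Xu^2 + Xv) * x.1 - (C 2 * Xu^3 + C 2 * (Xu * Xv)) * x.2 := rfl

lemma Ql_apply (x : MP × MP) :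
    Ql x = (C 2 * Xu^2 + Xv) * x.2 - C 2 * Xu * x.1 := by
  simp only [Ql, LinearMap.sub_apply, LinearMap.comp_apply, LinearMap.fst_apply,
    LinearMap.snd_apply, LinearMap.mulLeft_apply]

lemma hnumP (x : MP × MP) :
    ψ (Pl x) = (2*ψ Xu^2 + ψ Xv) * ψ x.1 - (2*ψ Xu^3 + 2*(ψ Xu * ψ Xv)) * ψ x.2 := by
  rw [Pl_apply]
  simp only [map_sub, map_add, map_mul, map_pow, ψC2]

lemma hnumQ (x : MP × MP) :
    ψ (Ql x) = (2*ψ Xu^2 + ψ Xv) * ψ x.2 - 2*ψ Xu * ψ x.1 := by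
  rw [Ql_apply]
  simp only [map_sub, map_add, map_mul, map_pow, ψC2]

lemma mulVec0 (x : MP × MP) :
    Gt.mulVec ![ψ x.1, ψ x.2] 0 = ψ (Pl x) / ψ Xv ^ 4 := by
  have h : ψ Xv * (ψ Xv)⁻¹ = 1 := mul_inv_cancel₀ hXv
  rw [Gt, K₁₂, pow_two, Matrix.mul_fin_two, Matrix.mul_fin_two]
  simp only [Matrix.mulVec, dotProduct, Fin.sum_univ_two, Matrix.cons_val',
    Matrix.cons_val_zero, Matrix.cons_val_one, Matrix.head_cons, Matrix.empty_val',
    Matrix.cons_val_fin_one, Matrix.head_fin_const, Matrix.of_apply, uu_eq, vv_eq]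
  rw [hnumP]
  linear_combination (-((ψ Xv)⁻¹^3 * (ψ x.1 - 2 * ψ Xu * ψ x.2))) * h

lemma mulVec1 (x : MP × MP) :
    Gt.mulVec ![ψ x.1, ψ x.2] 1 = ψ (Ql x) / ψ Xv ^ 3 := by
  have h : ψ Xv * (ψ Xv)⁻¹ = 1 := mul_inv_cancel₀ hXv
  rw [Gt, K₁₂, pow_two, Matrix.mul_fin_two, Matrix.mul_fin_two]
  simp only [Matrix.mulVec, dotProduct, Fin.sum_univ_two, Matrix.cons_val',
    Matrix.cons_val_zero, Matrix.cons_val_one, Matrix.head_cons, Matrix.empty_val',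
    Matrix.cons_val_fin_one, Matrix.head_fin_const, Matrix.of_apply, uu_eq, vv_eq]
  rw [hnumQ]
  linear_combination (-(ψ x.2 * (ψ Xv)⁻¹^2)) * h

lemma cond_iff (x : MP × MP) :
    (∀ i : Fin 2, Gt.mulVec ![ψ x.1, ψ x.2] i ∈ R₁) ↔
      (Pl x).totalDegree ≤ 4 ∧ (Ql x).totalDegree ≤ 3 := by
  rw [Fin.forall_fin_two, mulVec0, mulVec1]
  exact ⟨fun h => ⟨deg_of_mem_R₁ h.1, deg_of_mem_R₁ h.2⟩,
    fun h => ⟨mem_R₁_of_deg h.1, mem_R₁_of_deg h.2⟩⟩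

/-! ### The fifteen generators -/

noncomputable def g : Fin 15 → MP × MP := ![
  (mono 0 0 1, 0), (mono 1 0 1, 0), (mono 2 0 1, 0), (mono 0 1 1, 0), (mono 1 1 1, 0),
  (mono 0 2 1, 0),
  (mono 0 3 1 + mono 2 2 2, mono 1 2 2),
  (0, mono 0 0 1), (0, mono 1 0 1),
  (mono 3 0 1, mono 2 0 1),
  (mono 4 0 2 + mono 2 1 1, mono 3 0 2),
  (0, mono 0 1 1),
  (mono 2 1 1, mono 1 1 1),
  (mono 3 1 2 + mono 1 2 1, mono 2 1 2),
  (mono 1 2 1, mono 0 2 1)]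

noncomputable def lc (i j : ℕ) : MP →ₗ[ℂ] ℂ where
  toFun p := coeff (mF i j) p
  map_add' p q := coeff_add _ _ _
  map_smul' c p := coeff_smul _ _ _

noncomputable def coords : Fin 15 → (MP × MP →ₗ[ℂ] ℂ) := ![
  (lc 0 0).comp (LinearMap.fst ℂ MP MP), (lc 1 0).comp (LinearMap.fst ℂ MP MP),
  (lc 2 0).comp (LinearMap.fst ℂ MP MP), (lc 0 1).comp (LinearMap.fst ℂ MP MP),
  (lc 1 1).comp (LinearMap.fst ℂ MP MP), (lc 0 2).comp (LinearMap.fst ℂ MP MP),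
  (lc 0 3).comp (LinearMap.fst ℂ MP MP),
  (lc 0 0).comp (LinearMap.snd ℂ MP MP), (lc 1 0).comp (LinearMap.snd ℂ MP MP),
  (lc 2 0).comp (LinearMap.snd ℂ MP MP),
  (1/2 : ℂ) • (lc 3 0).comp (LinearMap.snd ℂ MP MP),
  (lc 0 1).comp (LinearMap.snd ℂ MP MP), (lc 1 1).comp (LinearMap.snd ℂ MP MP),
  (1/2 : ℂ) • (lc 2 1).comp (LinearMap.snd ℂ MP MP),
  (lc 0 2).comp (LinearMap.snd ℂ MP MP)]

noncomputable def Φ : MP × MP →ₗ[ℂ] (Fin 15 → ℂ) := LinearMap.pi fun k => coords k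

lemma Φ_g (j : Fin 15) : Φ (g j) = Pi.single j 1 := by
  funext k
  simp only [Φ, LinearMap.pi_apply]
  fin_cases j <;> fin_cases k <;>
    norm_num [Matrix.cons_val_succ, coords, g, lc, coeff_mono, Pi.single_apply, Fin.ext_iff]

lemma Φ_sum (c : Fin 15 → ℂ) : Φ (∑ i, c i • g i) = c := by
  rw [map_sum]
  simp only [map_smul, Φ_g]
  funext k
  rw [Finset.sum_apply]
  simp only [Pi.smul_apply, Pi.single_apply, smul_eq_mul, mul_ite, mul_one, mul_zero]
  rw [Finset.sum_ite_eq]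
  simp

lemma g_indep : LinearIndependent ℂ g := by
  rw [Fintype.linearIndependent_iff]
  intro c hc i
  have h := Φ_sum c
  rw [hc, map_zero] at h
  exact (congrFun h.symm i)


lemma degb1 {i j : ℕ} {c : ℂ} {n : ℕ} (h : i + j ≤ n) : (mono i j c).totalDegree ≤ n :=
  (totalDegree_mono_le _ _ _).trans h

lemma degb2 {i j i' j' : ℕ} {c c' : ℂ} {n : ℕ} (h : i + j ≤ n) (h' : i' + j' ≤ n) :
    (mono i j c + mono i' j' c').totalDegree ≤ n :=
  (totalDegree_add _ _).trans (max_le ((totalDegree_mono_le _ _ _).trans h)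
    ((totalDegree_mono_le _ _ _).trans h'))


lemma hgP0 : (Pl (g 0)).totalDegree ≤ 4 := by
  have e : Pl (g 0) = mono 2 0 2 + mono 0 1 1 := by
    rw [show g 0 = (mono 0 0 1, 0) from rfl, Pl_apply]
    simp only [mono_eq, map_ofNat, map_one, map_neg]
    ring
  rw [e]
  exact degb2 (by norm_num) (by norm_num)

lemma hgQ0 : (Ql (g 0)).totalDegree ≤ 3 := by
  have e : Ql (g 0) = mono 1 0 (-2) := by
    rw [show g 0 = (mono 0 0 1, 0) from rfl, Ql_apply]
    simp only [mono_eq, map_ofNat, map_one, map_neg]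
    ring
  rw [e]
  exact degb1 (by norm_num)


lemma hgP1 : (Pl (g 1)).totalDegree ≤ 4 := by
  have e : Pl (g 1) = mono 3 0 2 + mono 1 1 1 := by
    rw [show g 1 = (mono 1 0 1, 0) from rfl, Pl_apply]
    simp only [mono_eq, map_ofNat, map_one, map_neg]
    ring
  rw [e]
  exact degb2 (by norm_num) (by norm_num)

lemma hgQ1 : (Ql (g 1)).totalDegree ≤ 3 := by
  have e : Ql (g 1) = mono 2 0 (-2) := by
    rw [show g 1 = (mono 1 0 1, 0) from rfl, Ql_apply]
    simp only [mono_eq, map_ofNat, map_one, map_neg]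
    ring
  rw [e]
  exact degb1 (by norm_num)


lemma hgP2 : (Pl (g 2)).totalDegree ≤ 4 := by
  have e : Pl (g 2) = mono 4 0 2 + mono 2 1 1 := by
    rw [show g 2 = (mono 2 0 1, 0) from rfl, Pl_apply]
    simp only [mono_eq, map_ofNat, map_one, map_neg]
    ring
  rw [e]
  exact degb2 (by norm_num) (by norm_num)

lemma hgQ2 : (Ql (g 2)).totalDegree ≤ 3 := by
  have e : Ql (g 2) = mono 3 0 (-2) := by
    rw [show g 2 = (mono 2 0 1, 0) from rfl, Ql_apply]
    simp only [mono_eq, map_ofNat, map_one, map_neg]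
    ring
  rw [e]
  exact degb1 (by norm_num)


lemma hgP3 : (Pl (g 3)).totalDegree ≤ 4 := by
  have e : Pl (g 3) = mono 2 1 2 + mono 0 2 1 := by
    rw [show g 3 = (mono 0 1 1, 0) from rfl, Pl_apply]
    simp only [mono_eq, map_ofNat, map_one, map_neg]
    ring
  rw [e]
  exact degb2 (by norm_num) (by norm_num)

lemma hgQ3 : (Ql (g 3)).totalDegree ≤ 3 := by
  have e : Ql (g 3) = mono 1 1 (-2) := by
    rw [show g 3 = (mono 0 1 1, 0) from rfl, Ql_apply]
    simp only [mono_eq, map_ofNat, map_one, map_neg]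
    ring
  rw [e]
  exact degb1 (by norm_num)


lemma hgP4 : (Pl (g 4)).totalDegree ≤ 4 := by
  have e : Pl (g 4) = mono 3 1 2 + mono 1 2 1 := by
    rw [show g 4 = (mono 1 1 1, 0) from rfl, Pl_apply]
    simp only [mono_eq, map_ofNat, map_one, map_neg]
    ring
  rw [e]
  exact degb2 (by norm_num) (by norm_num)

lemma hgQ4 : (Ql (g 4)).totalDegree ≤ 3 := by
  have e : Ql (g 4) = mono 2 1 (-2) := by
    rw [show g 4 = (mono 1 1 1, 0) from rfl, Ql_apply]
    simp only [mono_eq, map_ofNat, map_one, map_neg]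
    ring
  rw [e]
  exact degb1 (by norm_num)


lemma hgP5 : (Pl (g 5)).totalDegree ≤ 4 := by
  have e : Pl (g 5) = mono 2 2 2 + mono 0 3 1 := by
    rw [show g 5 = (mono 0 2 1, 0) from rfl, Pl_apply]
    simp only [mono_eq, map_ofNat, map_one, map_neg]
    ring
  rw [e]
  exact degb2 (by norm_num) (by norm_num)

lemma hgQ5 : (Ql (g 5)).totalDegree ≤ 3 := by
  have e : Ql (g 5) = mono 1 2 (-2) := by
    rw [show g 5 = (mono 0 2 1, 0) from rfl, Ql_apply]
    simp only [mono_eq, map_ofNat, map_one, map_neg]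
    ring
  rw [e]
  exact degb1 (by norm_num)


lemma hgP6 : (Pl (g 6)).totalDegree ≤ 4 := by
  have e : Pl (g 6) = mono 0 4 1 := by
    rw [show g 6 = (mono 0 3 1 + mono 2 2 2, mono 1 2 2) from rfl, Pl_apply]
    simp only [mono_eq, map_ofNat, map_one, map_neg]
    ring
  rw [e]
  exact degb1 (by norm_num)

lemma hgQ6 : (Ql (g 6)).totalDegree ≤ 3 := by
  have e : Ql (g 6) = (0 : MP) := by
    rw [show g 6 = (mono 0 3 1 + mono 2 2 2, mono 1 2 2) from rfl, Ql_apply]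
    simp only [mono_eq, map_ofNat, map_one, map_neg]
    ring
  rw [e]
  simp


lemma hgP7 : (Pl (g 7)).totalDegree ≤ 4 := by
  have e : Pl (g 7) = mono 3 0 (-2) + mono 1 1 (-2) := by
    rw [show g 7 = (0, mono 0 0 1) from rfl, Pl_apply]
    simp only [mono_eq, map_ofNat, map_one, map_neg]
    ring
  rw [e]
  exact degb2 (by norm_num) (by norm_num)

lemma hgQ7 : (Ql (g 7)).totalDegree ≤ 3 := by
  have e : Ql (g 7) = mono 2 0 2 + mono 0 1 1 := by
    rw [show g 7 = (0, mono 0 0 1) from rfl, Ql_apply]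
    simp only [mono_eq, map_ofNat, map_one, map_neg]
    ring
  rw [e]
  exact degb2 (by norm_num) (by norm_num)


lemma hgP8 : (Pl (g 8)).totalDegree ≤ 4 := by
  have e : Pl (g 8) = mono 4 0 (-2) + mono 2 1 (-2) := by
    rw [show g 8 = (0, mono 1 0 1) from rfl, Pl_apply]
    simp only [mono_eq, map_ofNat, map_one, map_neg]
    ring
  rw [e]
  exact degb2 (by norm_num) (by norm_num)

lemma hgQ8 : (Ql (g 8)).totalDegree ≤ 3 := by
  have e : Ql (g 8) = mono 3 0 2 + mono 1 1 1 := by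
    rw [show g 8 = (0, mono 1 0 1) from rfl, Ql_apply]
    simp only [mono_eq, map_ofNat, map_one, map_neg]
    ring
  rw [e]
  exact degb2 (by norm_num) (by norm_num)


lemma hgP9 : (Pl (g 9)).totalDegree ≤ 4 := by
  have e : Pl (g 9) = mono 3 1 (-1) := by
    rw [show g 9 = (mono 3 0 1, mono 2 0 1) from rfl, Pl_apply]
    simp only [mono_eq, map_ofNat, map_one, map_neg]
    ring
  rw [e]
  exact degb1 (by norm_num)

lemma hgQ9 : (Ql (g 9)).totalDegree ≤ 3 := by
  have e : Ql (g 9) = mono 2 1 1 := by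
    rw [show g 9 = (mono 3 0 1, mono 2 0 1) from rfl, Ql_apply]
    simp only [mono_eq, map_ofNat, map_one, map_neg]
    ring
  rw [e]
  exact degb1 (by norm_num)


lemma hgP10 : (Pl (g 10)).totalDegree ≤ 4 := by
  have e : Pl (g 10) = mono 2 2 1 := by
    rw [show g 10 = (mono 4 0 2 + mono 2 1 1, mono 3 0 2) from rfl, Pl_apply]
    simp only [mono_eq, map_ofNat, map_one, map_neg]
    ring
  rw [e]
  exact degb1 (by norm_num)

lemma hgQ10 : (Ql (g 10)).totalDegree ≤ 3 := by
  have e : Ql (g 10) = (0 : MP) := by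
    rw [show g 10 = (mono 4 0 2 + mono 2 1 1, mono 3 0 2) from rfl, Ql_apply]
    simp only [mono_eq, map_ofNat, map_one, map_neg]
    ring
  rw [e]
  simp


lemma hgP11 : (Pl (g 11)).totalDegree ≤ 4 := by
  have e : Pl (g 11) = mono 3 1 (-2) + mono 1 2 (-2) := by
    rw [show g 11 = (0, mono 0 1 1) from rfl, Pl_apply]
    simp only [mono_eq, map_ofNat, map_one, map_neg]
    ring
  rw [e]
  exact degb2 (by norm_num) (by norm_num)

lemma hgQ11 : (Ql (g 11)).totalDegree ≤ 3 := by
  have e : Ql (g 11) = mono 2 1 2 + mono 0 2 1 := by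
    rw [show g 11 = (0, mono 0 1 1) from rfl, Ql_apply]
    simp only [mono_eq, map_ofNat, map_one, map_neg]
    ring
  rw [e]
  exact degb2 (by norm_num) (by norm_num)


lemma hgP12 : (Pl (g 12)).totalDegree ≤ 4 := by
  have e : Pl (g 12) = mono 2 2 (-1) := by
    rw [show g 12 = (mono 2 1 1, mono 1 1 1) from rfl, Pl_apply]
    simp only [mono_eq, map_ofNat, map_one, map_neg]
    ring
  rw [e]
  exact degb1 (by norm_num)

lemma hgQ12 : (Ql (g 12)).totalDegree ≤ 3 := by
  have e : Ql (g 12) = mono 1 2 1 := by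
    rw [show g 12 = (mono 2 1 1, mono 1 1 1) from rfl, Ql_apply]
    simp only [mono_eq, map_ofNat, map_one, map_neg]
    ring
  rw [e]
  exact degb1 (by norm_num)


lemma hgP13 : (Pl (g 13)).totalDegree ≤ 4 := by
  have e : Pl (g 13) = mono 1 3 1 := by
    rw [show g 13 = (mono 3 1 2 + mono 1 2 1, mono 2 1 2) from rfl, Pl_apply]
    simp only [mono_eq, map_ofNat, map_one, map_neg]
    ring
  rw [e]
  exact degb1 (by norm_num)

lemma hgQ13 : (Ql (g 13)).totalDegree ≤ 3 := by
  have e : Ql (g 13) = (0 : MP) := by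
    rw [show g 13 = (mono 3 1 2 + mono 1 2 1, mono 2 1 2) from rfl, Ql_apply]
    simp only [mono_eq, map_ofNat, map_one, map_neg]
    ring
  rw [e]
  simp


lemma hgP14 : (Pl (g 14)).totalDegree ≤ 4 := by
  have e : Pl (g 14) = mono 1 3 (-1) := by
    rw [show g 14 = (mono 1 2 1, mono 0 2 1) from rfl, Pl_apply]
    simp only [mono_eq, map_ofNat, map_one, map_neg]
    ring
  rw [e]
  exact degb1 (by norm_num)

lemma hgQ14 : (Ql (g 14)).totalDegree ≤ 3 := by
  have e : Ql (g 14) = mono 0 3 1 := by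
    rw [show g 14 = (mono 1 2 1, mono 0 2 1) from rfl, Ql_apply]
    simp only [mono_eq, map_ofNat, map_one, map_neg]
    ring
  rw [e]
  exact degb1 (by norm_num)


lemma g_mem (i : Fin 15) : (Pl (g i)).totalDegree ≤ 4 ∧ (Ql (g i)).totalDegree ≤ 3 := by
  fin_cases i
  exacts [⟨hgP0, hgQ0⟩, ⟨hgP1, hgQ1⟩, ⟨hgP2, hgQ2⟩, ⟨hgP3, hgQ3⟩, ⟨hgP4, hgQ4⟩,
    ⟨hgP5, hgQ5⟩, ⟨hgP6, hgQ6⟩, ⟨hgP7, hgQ7⟩, ⟨hgP8, hgQ8⟩, ⟨hgP9, hgQ9⟩,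
    ⟨hgP10, hgQ10⟩, ⟨hgP11, hgQ11⟩, ⟨hgP12, hgQ12⟩, ⟨hgP13, hgQ13⟩, ⟨hgP14, hgQ14⟩]

/-! ### Degree windows -/

lemma deg_sub_le {p q : MP} {n : ℕ} (hp : p.totalDegree ≤ n) (hq : q.totalDegree ≤ n) :
    (p - q).totalDegree ≤ n := by
  have h : p - q = p + (-1 : ℂ) • q := by
    rw [neg_one_smul]; ring
  rw [h]
  exact (totalDegree_add _ _).trans (max_le hp ((totalDegree_smul_le _ _).trans hq))

lemma deg_small1 : (C 2 * Xu^2 + Xv : MP).totalDegree ≤ 2 := by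
  rw [show (C 2 * Xu^2 + Xv : MP) = mono 2 0 2 + mono 0 1 1 from by
    simp only [mono_eq, map_ofNat, map_one]; ring]
  exact degb2 (by norm_num) (by norm_num)

lemma deg_small2 : (C 2 * Xu^3 + C 2 * (Xu * Xv) : MP).totalDegree ≤ 3 := by
  rw [show (C 2 * Xu^3 + C 2 * (Xu * Xv) : MP) = mono 3 0 2 + mono 1 1 2 from by
    simp only [mono_eq, map_ofNat, map_one]; ring]
  exact degb2 (by norm_num) (by norm_num)

lemma deg_small3 : (C 2 * Xu : MP).totalDegree ≤ 1 := by
  rw [show (C 2 * Xu : MP) = mono 1 0 2 from by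
    simp only [mono_eq, map_ofNat, map_one]; ring]
  exact degb1 (by norm_num)

lemma deg1_le {x : MP × MP} (hP : (Pl x).totalDegree ≤ 4) (hQ : (Ql x).totalDegree ≤ 3) :
    x.1.totalDegree ≤ 4 ∧ x.2.totalDegree ≤ 3 := by
  have id1 : Xv * (Xv * x.1)
      = (C 2*Xu^2 + Xv) * Pl x + (C 2*Xu^3 + C 2*(Xu*Xv)) * Ql x := by
    rw [Pl_apply, Ql_apply]; simp only [map_ofNat]; ring
  have id2 : Xv * (Xv * x.2) = C 2*Xu * Pl x + (C 2*Xu^2 + Xv) * Ql x := by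
    rw [Pl_apply, Ql_apply]; simp only [map_ofNat]; ring
  have hd1 : ((C 2*Xu^2 + Xv) * Pl x + (C 2*Xu^3 + C 2*(Xu*Xv)) * Ql x).totalDegree ≤ 6 := by
    refine (totalDegree_add _ _).trans (max_le ((totalDegree_mul _ _).trans ?_)
      ((totalDegree_mul _ _).trans ?_))
    · have := deg_small1; omega
    · have := deg_small2; omega
  have hd2 : (C 2*Xu * Pl x + (C 2*Xu^2 + Xv) * Ql x).totalDegree ≤ 5 := by
    refine (totalDegree_add _ _).trans (max_le ((totalDegree_mul _ _).trans ?_)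
      ((totalDegree_mul _ _).trans ?_))
    · have := deg_small3; omega
    · have := deg_small1; omega
  have key1 : ∀ i j : ℕ, 4 < i + j → coeff (mF i j) x.1 = 0 := by
    intro i j hij
    have hc : coeff (mF i (j + 2)) (Xv * (Xv * x.1)) = coeff (mF i j) x.1 := by
      simp only [coeff_Xv_mul]
      norm_num
    rw [id1] at hc
    rw [← hc]
    exact coeff_eq_zero_of_totalDegree_lt (by rw [mF_sum']; omega)
  have key2 : ∀ i j : ℕ, 3 < i + j → coeff (mF i j) x.2 = 0 := by
    intro i j hij
    have hc : coeff (mF i (j + 2)) (Xv * (Xv * x.2)) = coeff (mF i j) x.2 := by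
      simp only [coeff_Xv_mul]
      norm_num
    rw [id2] at hc
    rw [← hc]
    exact coeff_eq_zero_of_totalDegree_lt (by rw [mF_sum']; omega)
  constructor
  · by_contra hfour
    push_neg at hfour
    have hne : x.1 ≠ 0 := by
      rintro h
      rw [h] at hfour
      simp at hfour
    obtain ⟨m, hm, hsup⟩ := Finset.exists_mem_eq_sup x.1.support
      (by simpa using hne) (fun m => m.sum fun _ e => e)
    have hne2 : coeff (mF (m 0) (m 1)) x.1 ≠ 0 := by
      rw [← eq_mF]; exact mem_support_iff.mp hm
    refine hne2 (key1 _ _ ?_)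
    have hdef : x.1.totalDegree = m.sum fun _ e => e := hsup
    rw [wsum] at hdef
    omega
  · by_contra hfour
    push_neg at hfour
    have hne : x.2 ≠ 0 := by
      rintro h
      rw [h] at hfour
      simp at hfour
    obtain ⟨m, hm, hsup⟩ := Finset.exists_mem_eq_sup x.2.support
      (by simpa using hne) (fun m => m.sum fun _ e => e)
    have hne2 : coeff (mF (m 0) (m 1)) x.2 ≠ 0 := by
      rw [← eq_mF]; exact mem_support_iff.mp hm
    refine hne2 (key2 _ _ ?_)
    have hdef : x.2.totalDegree = m.sum fun _ e => e := hsup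
    rw [wsum] at hdef
    omega

/-! ### Coefficient extraction from `Ql` -/

lemma coeffQ (x : MP × MP) (i j : ℕ) :
    coeff (mF i j) (Ql x) =
      2 * (if i = 0 then 0 else if i - 1 = 0 then 0 else coeff (mF (i-1-1) j) x.2)
      + (if j = 0 then 0 else coeff (mF i (j-1)) x.2)
      - 2 * (if i = 0 then 0 else coeff (mF (i-1) j) x.1) := by
  rw [show Ql x = C 2 * (Xu * (Xu * x.2)) + Xv * x.2 - C 2 * (Xu * x.1) from by
    rw [Ql_apply]; ring]
  simp only [coeff_sub, coeff_add, coeff_C_mul, coeff_Xu_mul, coeff_Xv_mul]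

lemma RECON {p : MP} {n : ℕ} (hd : p.totalDegree ≤ n)
    (hc : ∀ i j : ℕ, i + j ≤ n → coeff (mF i j) p = 0) : p = 0 := by
  rw [MvPolynomial.eq_zero_iff]
  intro d
  rcases le_or_gt ((d 0) + (d 1)) n with h | h
  · rw [eq_mF d]; exact hc _ _ h
  · exact coeff_eq_zero_of_totalDegree_lt (by rw [wsum']; omega)

/-! ### The core uniqueness argument -/

lemma CORE {x : MP × MP} (h1 : x.1.totalDegree ≤ 4) (h2 : x.2.totalDegree ≤ 3)
    (hQ : (Ql x).totalDegree ≤ 3) (hfree : Φ x = 0) : x = 0 := by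
  have fa00 : coeff (mF 0 0) x.1 = 0 := by
    have h := congrFun hfree ⟨0, by norm_num⟩
    norm_num [Φ, coords, lc, Matrix.cons_val_succ, LinearMap.pi_apply, LinearMap.smul_apply, smul_eq_mul] at h
    exact h
  have fa10 : coeff (mF 1 0) x.1 = 0 := by
    have h := congrFun hfree ⟨1, by norm_num⟩
    norm_num [Φ, coords, lc, Matrix.cons_val_succ, LinearMap.pi_apply, LinearMap.smul_apply, smul_eq_mul] at h
    exact h
  have fa20 : coeff (mF 2 0) x.1 = 0 := by
    have h := congrFun hfree ⟨2, by norm_num⟩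
    norm_num [Φ, coords, lc, Matrix.cons_val_succ, LinearMap.pi_apply, LinearMap.smul_apply, smul_eq_mul] at h
    exact h
  have fa01 : coeff (mF 0 1) x.1 = 0 := by
    have h := congrFun hfree ⟨3, by norm_num⟩
    norm_num [Φ, coords, lc, Matrix.cons_val_succ, LinearMap.pi_apply, LinearMap.smul_apply, smul_eq_mul] at h
    exact h
  have fa11 : coeff (mF 1 1) x.1 = 0 := by
    have h := congrFun hfree ⟨4, by norm_num⟩
    norm_num [Φ, coords, lc, Matrix.cons_val_succ, LinearMap.pi_apply, LinearMap.smul_apply, smul_eq_mul] at h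
    exact h
  have fa02 : coeff (mF 0 2) x.1 = 0 := by
    have h := congrFun hfree ⟨5, by norm_num⟩
    norm_num [Φ, coords, lc, Matrix.cons_val_succ, LinearMap.pi_apply, LinearMap.smul_apply, smul_eq_mul] at h
    exact h
  have fa03 : coeff (mF 0 3) x.1 = 0 := by
    have h := congrFun hfree ⟨6, by norm_num⟩
    norm_num [Φ, coords, lc, Matrix.cons_val_succ, LinearMap.pi_apply, LinearMap.smul_apply, smul_eq_mul] at h
    exact h
  have fb00 : coeff (mF 0 0) x.2 = 0 := by
    have h := congrFun hfree ⟨7, by norm_num⟩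
    norm_num [Φ, coords, lc, Matrix.cons_val_succ, LinearMap.pi_apply, LinearMap.smul_apply, smul_eq_mul] at h
    exact h
  have fb10 : coeff (mF 1 0) x.2 = 0 := by
    have h := congrFun hfree ⟨8, by norm_num⟩
    norm_num [Φ, coords, lc, Matrix.cons_val_succ, LinearMap.pi_apply, LinearMap.smul_apply, smul_eq_mul] at h
    exact h
  have fb20 : coeff (mF 2 0) x.2 = 0 := by
    have h := congrFun hfree ⟨9, by norm_num⟩
    norm_num [Φ, coords, lc, Matrix.cons_val_succ, LinearMap.pi_apply, LinearMap.smul_apply, smul_eq_mul] at h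
    exact h
  have fb30 : coeff (mF 3 0) x.2 = 0 := by
    have h := congrFun hfree ⟨10, by norm_num⟩
    norm_num [Φ, coords, lc, Matrix.cons_val_succ, LinearMap.pi_apply, LinearMap.smul_apply, smul_eq_mul] at h
    exact h
  have fb01 : coeff (mF 0 1) x.2 = 0 := by
    have h := congrFun hfree ⟨11, by norm_num⟩
    norm_num [Φ, coords, lc, Matrix.cons_val_succ, LinearMap.pi_apply, LinearMap.smul_apply, smul_eq_mul] at h
    exact h
  have fb11 : coeff (mF 1 1) x.2 = 0 := by
    have h := congrFun hfree ⟨12, by norm_num⟩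
    norm_num [Φ, coords, lc, Matrix.cons_val_succ, LinearMap.pi_apply, LinearMap.smul_apply, smul_eq_mul] at h
    exact h
  have fb21 : coeff (mF 2 1) x.2 = 0 := by
    have h := congrFun hfree ⟨13, by norm_num⟩
    norm_num [Φ, coords, lc, Matrix.cons_val_succ, LinearMap.pi_apply, LinearMap.smul_apply, smul_eq_mul] at h
    exact h
  have fb02 : coeff (mF 0 2) x.2 = 0 := by
    have h := congrFun hfree ⟨14, by norm_num⟩
    norm_num [Φ, coords, lc, Matrix.cons_val_succ, LinearMap.pi_apply, LinearMap.smul_apply, smul_eq_mul] at h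
    exact h
  -- coefficients of `x.2` that vanish for degree reasons
  have zb40 : coeff (mF 4 0) x.2 = 0 :=
    coeff_eq_zero_of_totalDegree_lt (by (first | rw [mF_sum] | rw [mF_sum']); omega)
  have zb31 : coeff (mF 3 1) x.2 = 0 :=
    coeff_eq_zero_of_totalDegree_lt (by (first | rw [mF_sum] | rw [mF_sum']); omega)
  have zb22 : coeff (mF 2 2) x.2 = 0 :=
    coeff_eq_zero_of_totalDegree_lt (by (first | rw [mF_sum] | rw [mF_sum']); omega)
  have zb13 : coeff (mF 1 3) x.2 = 0 :=
    coeff_eq_zero_of_totalDegree_lt (by (first | rw [mF_sum] | rw [mF_sum']); omega)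
  -- extraction of the vanishing coefficients of `Ql x` in degrees 4 and 5
  have hQz : ∀ i j : ℕ, i + j = 4 ∨ i + j = 5 → coeff (mF i j) (Ql x) = 0 := by
    intro i j hij
    exact coeff_eq_zero_of_totalDegree_lt (by (first | rw [mF_sum] | rw [mF_sum']); omega)
  have E40 := coeffQ x 4 0; rw [hQz 4 0 (by omega)] at E40; norm_num at E40
  have E50 := coeffQ x 5 0; rw [hQz 5 0 (by omega)] at E50; norm_num at E50
  have E31 := coeffQ x 3 1; rw [hQz 3 1 (by omega)] at E31; norm_num at E31
  have E41 := coeffQ x 4 1; rw [hQz 4 1 (by omega)] at E41; norm_num at E41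
  have E22 := coeffQ x 2 2; rw [hQz 2 2 (by omega)] at E22; norm_num at E22
  have E32 := coeffQ x 3 2; rw [hQz 3 2 (by omega)] at E32; norm_num at E32
  have E13 := coeffQ x 1 3; rw [hQz 1 3 (by omega)] at E13; norm_num at E13
  have E23 := coeffQ x 2 3; rw [hQz 2 3 (by omega)] at E23; norm_num at E23
  have E14 := coeffQ x 1 4; rw [hQz 1 4 (by omega)] at E14; norm_num at E14
  have E04 := coeffQ x 0 4; rw [hQz 0 4 (by omega)] at E04; norm_num at E04
  -- the ten determined coefficients vanish
  have b03 : coeff (mF 0 3) x.2 = 0 := by linear_combination (-1 : ℂ) * E04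
  have b12 : coeff (mF 1 2) x.2 = 0 := by linear_combination (-1 : ℂ) * E13 + 2 * fa03
  have a13 : coeff (mF 1 3) x.1 = 0 := by
    linear_combination (1/2 : ℂ) * E23 + b03 + (1/2 : ℂ) * zb22
  have a04 : coeff (mF 0 4) x.1 = 0 := by
    linear_combination (1/2 : ℂ) * E14 + (1/2 : ℂ) * zb13
  have a22 : coeff (mF 2 2) x.1 = 0 := by
    linear_combination (1/2 : ℂ) * E32 + b12 + (1/2 : ℂ) * zb31
  have a12 : coeff (mF 1 2) x.1 = 0 := by
    linear_combination (1/2 : ℂ) * E22 + fb02 + (1/2 : ℂ) * fb21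
  have a31 : coeff (mF 3 1) x.1 = 0 := by
    linear_combination (1/2 : ℂ) * E41 + fb21 + (1/2 : ℂ) * zb40
  have a21 : coeff (mF 2 1) x.1 = 0 := by
    linear_combination (1/2 : ℂ) * E31 + fb11 + (1/2 : ℂ) * fb30
  have a40 : coeff (mF 4 0) x.1 = 0 := by linear_combination (1/2 : ℂ) * E50 + fb30
  have a30 : coeff (mF 3 0) x.1 = 0 := by linear_combination (1/2 : ℂ) * E40 + fb20
  have hx1 : x.1 = 0 := by
    refine RECON h1 ?_
    intro i j hij
    have hi : i ≤ 4 := by omega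
    interval_cases i <;> (have hj : j ≤ 4 := by omega) <;> interval_cases j <;>
      first | assumption | omega
  have hx2 : x.2 = 0 := by
    refine RECON h2 ?_
    intro i j hij
    have hi : i ≤ 3 := by omega
    interval_cases i <;> (have hj : j ≤ 3 := by omega) <;> interval_cases j <;>
      first | assumption | omega
  rw [Prod.ext_iff]
  exact ⟨hx1, hx2⟩

lemma reverse {x : MP × MP} (hP : (Pl x).totalDegree ≤ 4) (hQ : (Ql x).totalDegree ≤ 3) :
    x ∈ Submodule.span ℂ (Set.range g) := by
  have hmem : (∑ i, Φ x i • g i) ∈ Submodule.span ℂ (Set.range g) :=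
    Submodule.sum_mem _ fun i _ => Submodule.smul_mem _ _ (Submodule.subset_span ⟨i, rfl⟩)
  have hsumP : (Pl (∑ i, Φ x i • g i)).totalDegree ≤ 4 := by
    rw [map_sum]
    refine (totalDegree_finset_sum _ _).trans (Finset.sup_le fun i _ => ?_)
    rw [map_smul]
    exact (totalDegree_smul_le _ _).trans (g_mem i).1
  have hsumQ : (Ql (∑ i, Φ x i • g i)).totalDegree ≤ 3 := by
    rw [map_sum]
    refine (totalDegree_finset_sum _ _).trans (Finset.sup_le fun i _ => ?_)
    rw [map_smul]
    exact (totalDegree_smul_le _ _).trans (g_mem i).2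
  have hrP : (Pl (x - ∑ i, Φ x i • g i)).totalDegree ≤ 4 := by
    rw [map_sub]; exact deg_sub_le hP hsumP
  have hrQ : (Ql (x - ∑ i, Φ x i • g i)).totalDegree ≤ 3 := by
    rw [map_sub]; exact deg_sub_le hQ hsumQ
  have hdeg := deg1_le hrP hrQ
  have hΦr : Φ (x - ∑ i, Φ x i • g i) = 0 := by
    rw [map_sub, Φ_sum, sub_self]
  have hzero : x - ∑ i, Φ x i • g i = 0 := CORE hdeg.1 hdeg.2 hrQ hΦr
  have hxe : x = ∑ i, Φ x i • g i := by rwa [sub_eq_zero] at hzero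
  rw [hxe]
  exact hmem

end Stmt12Aux

open Stmt12Aux in
/-- Example 7.3: global sections of `φ_*O_X(4,2)`.  The set of pairs
`(s₁, s₂)` of polynomials in `ℂ[u,v]` such that both entries of `G~ · (s₁, s₂)ᵗ` lie in `R₁`
is a `ℂ`-linear subspace of `ℂ[u,v] × ℂ[u,v]` of dimension `15`. -/
theorem stmt12 :
    ∃ S : Submodule ℂ (MvPolynomial (Fin 2) ℂ × MvPolynomial (Fin 2) ℂ),
      (↑S : Set (MvPolynomial (Fin 2) ℂ × MvPolynomial (Fin 2) ℂ)) =
        {p | ∀ i : Fin 2,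
          Gt.mulVec ![algebraMap (MvPolynomial (Fin 2) ℂ) KK p.1,
                      algebraMap (MvPolynomial (Fin 2) ℂ) KK p.2] i ∈ R₁} ∧
      Module.finrank ℂ S = 15 := by
  refine ⟨Submodule.span ℂ (Set.range g), ?_, ?_⟩
  · ext x
    simp only [SetLike.mem_coe, Set.mem_setOf_eq]
    constructor
    · intro hx
      have hle : Submodule.span ℂ (Set.range g) ≤
          (MvPolynomial.restrictTotalDegree (Fin 2) ℂ 4).comap Pl ⊓
          (MvPolynomial.restrictTotalDegree (Fin 2) ℂ 3).comap Ql := by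
        rw [Submodule.span_le]
        rintro _ ⟨i, rfl⟩
        refine Submodule.mem_inf.mpr ⟨Submodule.mem_comap.mpr ?_, Submodule.mem_comap.mpr ?_⟩
        · exact (MvPolynomial.mem_restrictTotalDegree _ _ _).mpr (g_mem i).1
        · exact (MvPolynomial.mem_restrictTotalDegree _ _ _).mpr (g_mem i).2
      have hm := hle hx
      rw [Submodule.mem_inf, Submodule.mem_comap, Submodule.mem_comap,
        MvPolynomial.mem_restrictTotalDegree, MvPolynomial.mem_restrictTotalDegree] at hm
      exact (cond_iff x).mpr hm
    · intro hx
      have hm := (cond_iff x).mp hx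
      exact reverse hm.1 hm.2
  · rw [finrank_span_eq_card g_indep]
    simp
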